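/- arXiv:2205.11353 — 3 statements merged into one kernel-verified Lean document; each statement's English description precedes it below -/
import Mathlib

section
/- Let A and B be equal-cardinality finite multisets of nonnegative reals such that Σ_{a∈A} aⁿ = Σ_{b∈B} bⁿ for all n ∈ ℕ. Then A = B as multisets. -/
open MeasureTheory Real Filter

noncomputable def phi (t : ℝ) : ℝ := Real.exp (-t^2/2) / Real.sqrt (2*Real.pi)

noncomputable def Phi (x : ℝ) : ℝ := ∫ s in Set.Iic x, phi s

private lemma aux_enum (A : Multiset ℝ) :
    ∃ f : Fin (Multiset.card A) → ℝ, Multiset.map f Finset.univ.val = A := by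
  have hlen : A.toList.length = Multiset.card A := Multiset.length_toList A
  refine ⟨fun i => A.toList.get (Fin.cast hlen.symm i), ?_⟩
  rw [Fin.univ_val_map]
  have : List.ofFn (fun i => A.toList.get (Fin.cast hlen.symm i)) = A.toList := by
    apply List.ext_get
    · simp [hlen]
    · intro n h1 h2
      simp
  rw [this, Multiset.coe_toList]

theorem stmt16 (A B : Multiset ℝ) (hA : ∀ a ∈ A, 0 ≤ a) (hB : ∀ b ∈ B, 0 ≤ b)
    (hcard : A.card = B.card)
    (h : ∀ n : ℕ, 1 ≤ n →
      (A.map (fun a => a ^ n)).sum = (B.map (fun b => b ^ n)).sum) :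
    A = B := by
  classical
  set N := Multiset.card A with hN
  obtain ⟨f, hf⟩ := aux_enum A
  obtain ⟨g', hg'⟩ := aux_enum B
  set g : Fin N → ℝ := fun i => g' (Fin.cast hcard i) with hgdef
  have hg : Multiset.map g Finset.univ.val = B := by
    rw [← hg']
    rw [hgdef]
    rw [show (Multiset.map (fun i => g' (Fin.cast hcard i)) Finset.univ.val)
        = Multiset.map g' (Multiset.map (Fin.cast hcard) Finset.univ.val) by
      rw [Multiset.map_map]; rfl]
    congr 1
    -- map of Fin.cast over univ = univ
    have : Multiset.map (Fin.cast hcard) Finset.univ.val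
        = (Finset.univ.map ⟨Fin.cast hcard, Fin.cast_injective _⟩).val := rfl
    rw [this]
    congr 1
    apply Finset.eq_univ_of_card
    simp
    exact hcard
  -- power sums via aeval
  have hpsumA : ∀ n : ℕ, MvPolynomial.aeval f (MvPolynomial.psum (Fin N) ℝ n)
      = (A.map (fun a => a ^ n)).sum := by
    intro n
    rw [MvPolynomial.psum, map_sum]
    simp only [map_pow, MvPolynomial.aeval_X]
    rw [← hf, Multiset.map_map]
    rfl
  have hpsumB : ∀ n : ℕ, MvPolynomial.aeval g (MvPolynomial.psum (Fin N) ℝ n)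
      = (B.map (fun b => b ^ n)).sum := by
    intro n
    rw [MvPolynomial.psum, map_sum]
    simp only [map_pow, MvPolynomial.aeval_X]
    rw [← hg, Multiset.map_map]
    rfl
  have hesymmA : ∀ k : ℕ, MvPolynomial.aeval f (MvPolynomial.esymm (Fin N) ℝ k)
      = A.esymm k := by
    intro k
    rw [MvPolynomial.aeval_esymm_eq_multiset_esymm, hf]
  have hesymmB : ∀ k : ℕ, MvPolynomial.aeval g (MvPolynomial.esymm (Fin N) ℝ k)
      = B.esymm k := by
    intro k
    rw [MvPolynomial.aeval_esymm_eq_multiset_esymm, hg]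
  -- esymm equality by strong induction via Newton's identities
  have key : ∀ k : ℕ, A.esymm k = B.esymm k := by
    intro k
    induction k using Nat.strong_induction_on with
    | _ k ih =>
      rcases Nat.eq_zero_or_pos k with rfl | hk
      · rw [← hesymmA 0, ← hesymmB 0]; simp [MvPolynomial.esymm_zero]
      · have e1 := congrArg (MvPolynomial.aeval f)
          (MvPolynomial.psum_eq_mul_esymm_sub_sum (Fin N) ℝ k hk)
        have e2 := congrArg (MvPolynomial.aeval g)
          (MvPolynomial.psum_eq_mul_esymm_sub_sum (Fin N) ℝ k hk)
        simp only [map_sub, map_mul, map_sum, map_pow, map_neg, map_one, map_natCast] at e1 e2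
        rw [hpsumA k, hesymmA k] at e1
        rw [hpsumB k, hesymmB k] at e2
        simp only [hpsumA, hesymmA] at e1
        simp only [hpsumB, hesymmB] at e2
        have hsum : ∑ a ∈ Finset.filter (fun a => a.1 ∈ Set.Ioo 0 k)
              (Finset.HasAntidiagonal.antidiagonal k),
              (-1:ℝ) ^ a.1 * A.esymm a.1 * (A.map (fun x => x ^ a.2)).sum
            = ∑ a ∈ Finset.filter (fun a => a.1 ∈ Set.Ioo 0 k)
              (Finset.HasAntidiagonal.antidiagonal k),
              (-1:ℝ) ^ a.1 * B.esymm a.1 * (B.map (fun x => x ^ a.2)).sum := by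
          apply Finset.sum_congr rfl
          intro a ha
          simp only [Finset.mem_filter, Finset.HasAntidiagonal.mem_antidiagonal, Set.mem_Ioo] at ha
          have h1 : a.1 < k := ha.2.2
          have h2 : 1 ≤ a.2 := by omega
          rw [ih a.1 h1, h a.2 h2]
        have heq : ((-1:ℝ) ^ (k + 1) * k) * A.esymm k
            = ((-1:ℝ) ^ (k + 1) * k) * B.esymm k := by
          have hPk := h k hk
          rw [e1, e2] at hPk
          rw [hsum] at hPk
          linarith [hPk]
        have hne : ((-1:ℝ) ^ (k + 1) * k) ≠ 0 :=
          mul_ne_zero (pow_ne_zero _ (by norm_num)) (Nat.cast_ne_zero.mpr (by omega))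
        exact mul_left_cancel₀ hne heq
  -- conclude: the polynomials with these roots agree
  have hpoly : (A.map fun a => Polynomial.X - Polynomial.C a).prod
      = (B.map fun b => Polynomial.X - Polynomial.C b).prod := by
    apply Polynomial.ext
    intro k
    rcases le_or_gt k N with hkN | hkN
    · rw [Multiset.prod_X_sub_C_coeff A hkN, Multiset.prod_X_sub_C_coeff B (hcard ▸ hkN)]
      rw [← hcard, key]
    · rw [Polynomial.coeff_eq_zero_of_natDegree_lt,
        Polynomial.coeff_eq_zero_of_natDegree_lt]
      · rw [Polynomial.natDegree_multiset_prod_X_sub_C_eq_card, ← hcard]; exact hkN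
      · rw [Polynomial.natDegree_multiset_prod_X_sub_C_eq_card]; exact hkN
  have := congrArg Polynomial.roots hpoly
  rwa [Polynomial.roots_multiset_prod_X_sub_C, Polynomial.roots_multiset_prod_X_sub_C] at this
end

section
/- Let b₁, d₁, b₂, d₂ be reals with d₁ > d₂, and σ > 0. Then the limit as t → ∞ of [Φ((t−b₂)/σ)·Φ((d₂−t)/σ)] / [Φ((t−b₁)/σ)·Φ((d₁−t)/σ)] equals 0, where Φ is the standard normal CDF. -/
open MeasureTheory Real Filter

lemma sqrt_two_pi_pos : 0 < Real.sqrt (2*Real.pi) :=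
  Real.sqrt_pos.2 (by positivity)

lemma phi_pos (t : ℝ) : 0 < phi t :=
  div_pos (Real.exp_pos _) sqrt_two_pi_pos

lemma phi_eq (t : ℝ) : phi t = Real.exp (-(1/2) * t^2) / Real.sqrt (2*Real.pi) := by
  unfold phi; ring_nf

lemma integrable_phi : Integrable phi := by
  have h2 := (integrable_exp_neg_mul_sq (by norm_num : (0:ℝ) < 1/2)).div_const
      (Real.sqrt (2*Real.pi))
  exact h2.congr (Filter.Eventually.of_forall fun x => (phi_eq x).symm)

lemma integrable_mul_phi : Integrable (fun s : ℝ => (-s) * phi s) := by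
  have h2 := ((integrable_mul_exp_neg_mul_sq (by norm_num : (0:ℝ) < 1/2)).div_const
      (Real.sqrt (2*Real.pi))).neg
  refine h2.congr (Filter.Eventually.of_forall fun x => ?_)
  simp only [Pi.neg_apply]
  rw [phi_eq]; ring

lemma phi_mono {s t : ℝ} (hs : s ≤ t) (ht : t ≤ 0) : phi s ≤ phi t := by
  have h : Real.exp (-s^2/2) ≤ Real.exp (-t^2/2) := Real.exp_le_exp.2 (by nlinarith)
  exact (div_le_div_iff_of_pos_right sqrt_two_pi_pos).2 h

lemma hasDerivAt_phi (s : ℝ) : HasDerivAt phi ((-s) * phi s) s := by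
  have h1 : HasDerivAt (fun s : ℝ => -s^2/2) (-s) s := by
    have h := ((hasDerivAt_pow 2 s).neg).div_const 2
    exact h.congr_deriv (by push_cast; ring)
  have h2 := (h1.exp).div_const (Real.sqrt (2*Real.pi))
  show HasDerivAt (fun x => Real.exp (-x^2/2) / Real.sqrt (2*Real.pi)) ((-s) * phi s) s
  exact h2.congr_deriv (by unfold phi; ring)

lemma tendsto_phi_atBot : Tendsto phi atBot (nhds 0) := by
  have habs : Tendsto (fun s : ℝ => |s|) atBot atTop := tendsto_abs_atBot_atTop
  have hsq : Tendsto (fun s : ℝ => s^2) atBot atTop := by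
    have h := (tendsto_pow_atTop (two_ne_zero)).comp habs
    refine h.congr fun s => ?_
    simp [sq_abs]
  have hexp : Tendsto (fun s : ℝ => Real.exp (-s^2/2)) atBot (nhds 0) := by
    refine Real.tendsto_exp_atBot.comp ?_
    have h := hsq.atTop_div_const_of_neg (show (-2:ℝ) < 0 by norm_num)
    exact h.congr fun s => by ring
  have h := hexp.div_const (Real.sqrt (2*Real.pi))
  rw [zero_div] at h
  exact h

lemma integral_neg_mul_phi (x : ℝ) : ∫ s in Set.Iic x, (-s) * phi s = phi x := by
  have h := integral_Iic_of_hasDerivAt_of_tendsto' (a := x) (m := 0)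
    (fun s _ => hasDerivAt_phi s) integrable_mul_phi.integrableOn tendsto_phi_atBot
  simpa using h

lemma Phi_nonneg (x : ℝ) : 0 ≤ Phi x :=
  setIntegral_nonneg measurableSet_Iic fun s _ => (phi_pos s).le

lemma Phi_mono : Monotone Phi := fun x y h =>
  setIntegral_mono_set integrable_phi.integrableOn
    (Filter.Eventually.of_forall fun s => (phi_pos s).le)
    (HasSubset.Subset.eventuallyLE (Set.Iic_subset_Iic.2 h))

lemma Phi_le_one (x : ℝ) : Phi x ≤ 1 := by
  have h1 : ∫ s : ℝ, phi s = 1 := by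
    have hg : ∫ s : ℝ, Real.exp (-(1/2) * s^2) = Real.sqrt (2*Real.pi) := by
      rw [integral_gaussian (1/2), show Real.pi / (1/2) = 2 * Real.pi by ring]
    have h2 : ∫ s : ℝ, phi s = (∫ s : ℝ, Real.exp (-(1/2) * s^2)) / Real.sqrt (2*Real.pi) := by
      rw [← integral_div]
      exact integral_congr_ae (Filter.Eventually.of_forall fun s => phi_eq s)
    rw [h2, hg, div_self sqrt_two_pi_pos.ne']
  calc Phi x ≤ ∫ s : ℝ, phi s :=
        setIntegral_le_integral integrable_phi
          (Filter.Eventually.of_forall fun s => (phi_pos s).le)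
    _ = 1 := h1

lemma Phi_le_of_neg {x : ℝ} (hx : x < 0) : Phi x ≤ phi x / (-x) := by
  have hkey : ∀ s ∈ Set.Iic x, phi s ≤ ((-s) * phi s) / (-x) := by
    intro s hs
    have hs' : s ≤ x := hs
    rw [le_div_iff₀ (by linarith : (0:ℝ) < -x)]
    nlinarith [phi_pos s]
  calc Phi x ≤ ∫ s in Set.Iic x, ((-s) * phi s) / (-x) :=
        setIntegral_mono_on integrable_phi.integrableOn
          (integrable_mul_phi.div_const _).integrableOn measurableSet_Iic hkey
    _ = (∫ s in Set.Iic x, (-s) * phi s) / (-x) := integral_div _ _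
    _ = phi x / (-x) := by rw [integral_neg_mul_phi]

lemma Phi_ge {x ε : ℝ} (hx : x ≤ 0) (hε : 0 < ε) : ε * phi (x - ε) ≤ Phi x := by
  have h1 : ∫ _ in Set.Ioc (x - ε) x, phi (x - ε)
      ≤ ∫ s in Set.Ioc (x - ε) x, phi s := by
    refine setIntegral_mono_on (integrableOn_const ?_)
      integrable_phi.integrableOn measurableSet_Ioc ?_
    · rw [Real.volume_Ioc]; exact ENNReal.ofReal_ne_top
    · intro s hs
      exact phi_mono (le_of_lt hs.1) (le_trans hs.2 hx)
  have h2 : ∫ _ in Set.Ioc (x - ε) x, phi (x - ε) = ε * phi (x - ε) := by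
    rw [setIntegral_const, measureReal_def, Real.volume_Ioc, smul_eq_mul,
      ENNReal.toReal_ofReal (by linarith : (0:ℝ) ≤ x - (x - ε))]
    ring
  have h3 : ∫ s in Set.Ioc (x - ε) x, phi s ≤ Phi x :=
    setIntegral_mono_set integrable_phi.integrableOn
      (Filter.Eventually.of_forall fun s => (phi_pos s).le)
      (HasSubset.Subset.eventuallyLE Set.Ioc_subset_Iic_self)
  calc ε * phi (x - ε) = ∫ _ in Set.Ioc (x - ε) x, phi (x - ε) := h2.symm
    _ ≤ ∫ s in Set.Ioc (x - ε) x, phi s := h1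
    _ ≤ Phi x := h3

lemma Phi_pos (x : ℝ) : 0 < Phi x := by
  rcases le_or_gt x 0 with h | h
  · exact lt_of_lt_of_le (by rw [one_mul]; exact phi_pos _) (Phi_ge h one_pos)
  · exact lt_of_lt_of_le
      (lt_of_lt_of_le (by rw [one_mul]; exact phi_pos _) (Phi_ge le_rfl one_pos))
      (Phi_mono h.le)

lemma phi_div_phi (a b : ℝ) : phi a / phi b = Real.exp ((b^2 - a^2)/2) := by
  unfold phi
  rw [div_div_div_comm, div_self sqrt_two_pi_pos.ne', div_one, ← Real.exp_sub]
  congr 1; ring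

theorem stmt18 (b₁ d₁ b₂ d₂ σ : ℝ) (hd : d₂ < d₁) (hσ : 0 < σ) :
    Tendsto (fun t : ℝ =>
        (Phi ((t - b₂) / σ) * Phi ((d₂ - t) / σ)) /
        (Phi ((t - b₁) / σ) * Phi ((d₁ - t) / σ))) atTop (nhds 0) := by
  set ε : ℝ := (d₁ - d₂) / (2 * σ) with hεdef
  have hε : 0 < ε := by
    rw [hεdef]
    exact div_pos (by linarith) (by positivity)
  set K : ℝ := Phi 0 * ε with hK
  have hKpos : 0 < K := mul_pos (Phi_pos 0) hε
  set G : ℝ → ℝ := fun t =>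
    (1 / K) * Real.exp ((((d₁ - t) / σ - ε)^2 - ((d₂ - t) / σ)^2) / 2) with hGdef
  have hGtendsto : Tendsto G atTop (nhds 0) := by
    have hcoef : -(d₁ - d₂) / (2 * σ^2) < 0 :=
      div_neg_of_neg_of_pos (by linarith) (by positivity)
    have hlin : Tendsto (fun t : ℝ =>
        (-(d₁ - d₂) / (2 * σ^2)) * t + ((d₁ - σ*ε)^2 - d₂^2) / (2 * σ^2)) atTop atBot :=
      tendsto_atBot_add_const_right _ _ (tendsto_id.const_mul_atTop_of_neg hcoef)
    have hE : Tendsto (fun t : ℝ =>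
        (((d₁ - t) / σ - ε)^2 - ((d₂ - t) / σ)^2) / 2) atTop atBot := by
      refine hlin.congr fun t => ?_
      rw [hεdef]
      field_simp
      ring
    have h := (Real.tendsto_exp_atBot.comp hE).const_mul (1 / K)
    simpa [hGdef, mul_zero] using h
  refine tendsto_of_tendsto_of_tendsto_of_le_of_le' tendsto_const_nhds hGtendsto ?_ ?_
  · exact Filter.Eventually.of_forall fun t =>
      div_nonneg (mul_nonneg (Phi_nonneg _) (Phi_nonneg _))
        (mul_nonneg (Phi_nonneg _) (Phi_nonneg _))
  · filter_upwards [eventually_ge_atTop (max (max b₁ d₁) (d₂ + σ))] with t ht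
    have htb₁ : b₁ ≤ t := le_trans (le_trans (le_max_left _ _) (le_max_left _ _)) ht
    have htd₁ : d₁ ≤ t := le_trans (le_trans (le_max_right _ _) (le_max_left _ _)) ht
    have htd₂ : d₂ + σ ≤ t := le_trans (le_max_right _ _) ht
    have hu₁ : (d₁ - t) / σ ≤ 0 :=
      div_nonpos_of_nonpos_of_nonneg (by linarith) hσ.le
    have hu₂ : (d₂ - t) / σ ≤ -1 := by
      rw [div_le_iff₀ hσ]; linarith
    have hu₂neg : (d₂ - t) / σ < 0 := lt_of_le_of_lt hu₂ (by norm_num)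
    have hnum : Phi ((t - b₂) / σ) * Phi ((d₂ - t) / σ) ≤ phi ((d₂ - t) / σ) := by
      calc Phi ((t - b₂) / σ) * Phi ((d₂ - t) / σ)
          ≤ 1 * (phi ((d₂ - t) / σ) / (-((d₂ - t) / σ))) :=
            mul_le_mul (Phi_le_one _) (Phi_le_of_neg hu₂neg) (Phi_nonneg _) one_pos.le
        _ = phi ((d₂ - t) / σ) / (-((d₂ - t) / σ)) := one_mul _
        _ ≤ phi ((d₂ - t) / σ) / 1 :=
            div_le_div_of_nonneg_left (phi_pos _).le one_pos (by linarith)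
        _ = phi ((d₂ - t) / σ) := div_one _
    have hden : K * phi ((d₁ - t) / σ - ε)
        ≤ Phi ((t - b₁) / σ) * Phi ((d₁ - t) / σ) := by
      have h1 : Phi 0 ≤ Phi ((t - b₁) / σ) :=
        Phi_mono (div_nonneg (by linarith) hσ.le)
      have h2 : ε * phi ((d₁ - t) / σ - ε) ≤ Phi ((d₁ - t) / σ) := Phi_ge hu₁ hε
      calc K * phi ((d₁ - t) / σ - ε)
          = Phi 0 * (ε * phi ((d₁ - t) / σ - ε)) := by rw [hK]; ring
        _ ≤ Phi ((t - b₁) / σ) * Phi ((d₁ - t) / σ) :=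
            mul_le_mul h1 h2 (mul_pos hε (phi_pos _)).le (Phi_nonneg _)
    have hdenpos : 0 < K * phi ((d₁ - t) / σ - ε) := mul_pos hKpos (phi_pos _)
    calc (Phi ((t - b₂) / σ) * Phi ((d₂ - t) / σ)) / (Phi ((t - b₁) / σ) * Phi ((d₁ - t) / σ))
        ≤ phi ((d₂ - t) / σ) / (K * phi ((d₁ - t) / σ - ε)) :=
          div_le_div₀ (phi_pos _).le hnum hdenpos hden
      _ = G t := by
          rw [hGdef]
          rw [mul_comm K, ← div_div, phi_div_phi]
          ring
end

section
/- Let C and D be finite nonempty persistence diagrams with maximum death values d_max^C > d_max^D, and σ > 0. Then the unweighted Gaussian persistence curves G_C(t) = Σ_{(b,d)∈C} Φ((t−b)/σ)·Φ((d−t)/σ) and G_D satisfy: there exists T such that G_C(t) > G_D(t) for all t > T; in particular G_C ≠ G_D. -/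
open MeasureTheory Real Filter

lemma one_le_sqrt_two_pi : 1 ≤ Real.sqrt (2*Real.pi) := by
  rw [show (1:ℝ) = Real.sqrt 1 by simp]
  exact Real.sqrt_le_sqrt (by nlinarith [Real.pi_gt_three])

lemma phi_nonneg (t : ℝ) : 0 ≤ phi t := (phi_pos t).le

lemma integral_phi : ∫ t, phi t = 1 := by
  have h := integral_gaussian (1/2)
  have h2 : ∫ t : ℝ, Real.exp (-(1/2) * t^2) = Real.sqrt (2*Real.pi) := by
    rw [h]; norm_num; rw [mul_comm]
  unfold phi
  have : ∀ t : ℝ, Real.exp (-t^2/2) / Real.sqrt (2*Real.pi)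
      = Real.exp (-(1/2) * t^2) / Real.sqrt (2*Real.pi) := by
    intro t; ring_nf
  simp_rw [this]
  rw [integral_div, h2, div_self (ne_of_gt sqrt_two_pi_pos)]

lemma Phi_lower {y ε : ℝ} (hy : y ≤ 0) (hε : 0 < ε) : ε * phi (y - ε) ≤ Phi y := by
  have hsub : Set.Ioc (y - ε) y ⊆ Set.Iic y := Set.Ioc_subset_Iic_self
  calc ε * phi (y - ε) = ∫ _ in Set.Ioc (y - ε) y, phi (y - ε) := by
        rw [setIntegral_const, measureReal_def, Real.volume_Ioc, ENNReal.toReal_ofReal (by linarith),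
          smul_eq_mul]
        ring
    _ ≤ ∫ s in Set.Ioc (y - ε) y, phi s := by
        apply setIntegral_mono_on
        · exact integrableOn_const measure_Ioc_lt_top.ne
        · exact integrable_phi.integrableOn
        · exact measurableSet_Ioc
        · intro s hs
          unfold phi
          apply div_le_div_of_nonneg_right _ sqrt_two_pi_pos.le
          apply Real.exp_le_exp.2
          have h1 : y - ε < s := hs.1
          have h2 : s ≤ y := hs.2
          nlinarith
    _ ≤ Phi y := setIntegral_mono_set integrable_phi.integrableOn
        (Filter.Eventually.of_forall phi_nonneg)
        (HasSubset.Subset.eventuallyLE hsub)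

lemma Phi_upper {x : ℝ} (hx : x ≤ -1) : Phi x ≤ Real.exp (-x^2/2) := by
  have key : Phi x ≤ ∫ s in Set.Iic x, Real.exp (-x^2/2 - x) * Real.exp s := by
    apply setIntegral_mono_on
    · exact integrable_phi.integrableOn
    · exact ((integrableOn_exp_Iic x).const_mul _)
    · exact measurableSet_Iic
    · intro s hs
      have hsx : s ≤ x := hs
      unfold phi
      have h1 : Real.exp (-s^2/2) / Real.sqrt (2*Real.pi) ≤ Real.exp (-s^2/2) :=
        div_le_self (Real.exp_nonneg _) one_le_sqrt_two_pi
      refine h1.trans ?_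
      rw [← Real.exp_add]
      apply Real.exp_le_exp.2
      nlinarith [mul_nonpos_of_nonneg_of_nonpos (show (0:ℝ) ≤ x - s by linarith)
        (show x + s + 2 ≤ 0 by linarith)]
  calc Phi x ≤ ∫ s in Set.Iic x, Real.exp (-x^2/2 - x) * Real.exp s := key
    _ = Real.exp (-x^2/2 - x) * Real.exp x := by
        rw [integral_const_mul, integral_exp_Iic]
    _ = Real.exp (-x^2/2) := by rw [← Real.exp_add]; ring_nf

set_option maxHeartbeats 1000000 in
theorem stmt19 (C D : Multiset (ℝ × ℝ)) (hC : ∀ p ∈ C, p.1 < p.2)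
    (hD : ∀ p ∈ D, p.1 < p.2) (hCne : C ≠ 0) (hDne : D ≠ 0)
    (σ dC dD : ℝ) (hσ : 0 < σ)
    (hdC : dC ∈ C.map Prod.snd) (hdCmax : ∀ p ∈ C, p.2 ≤ dC)
    (hdD : dD ∈ D.map Prod.snd) (hdDmax : ∀ p ∈ D, p.2 ≤ dD)
    (hmax : dD < dC) :
    (∃ T : ℝ, ∀ t > T,
      (D.map (fun p => Phi ((t - p.1) / σ) * Phi ((p.2 - t) / σ))).sum <
      (C.map (fun p => Phi ((t - p.1) / σ) * Phi ((p.2 - t) / σ))).sum) ∧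
    (fun t : ℝ => (C.map (fun p => Phi ((t - p.1) / σ) * Phi ((p.2 - t) / σ))).sum) ≠
    (fun t : ℝ => (D.map (fun p => Phi ((t - p.1) / σ) * Phi ((p.2 - t) / σ))).sum) := by
  obtain ⟨pC, hpC, hpC2⟩ := Multiset.mem_map.1 hdC
  set ε : ℝ := (dC - dD) / (2 * σ) with hεdef
  have hε : 0 < ε := by
    apply div_pos (by linarith) (by linarith)
  set n : ℝ := (Multiset.card D : ℝ) with hn
  have hPhi0 : 0 < Phi 0 := by
    have := Phi_lower (le_refl (0:ℝ)) (show (0:ℝ) < 1 by norm_num)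
    nlinarith [phi_pos ((0:ℝ) - 1)]
  set c : ℝ := Phi 0 * (ε / Real.sqrt (2*Real.pi)) with hc
  have hcpos : 0 < c := by
    apply mul_pos hPhi0 (div_pos hε sqrt_two_pi_pos)
  -- key tendsto
  have hlin : Tendsto (fun t : ℝ => ((dD - t)/σ) * ε + ε^2/2) atTop atBot := by
    apply tendsto_atBot_add_const_right
    have h1 : Tendsto (fun t : ℝ => (dD - t)/σ) atTop atBot := by
      apply Tendsto.atBot_div_const hσ
      exact tendsto_atBot_add_const_left _ _ tendsto_neg_atTop_atBot
    exact h1.atBot_mul_const hε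
  have hexp : Tendsto (fun t : ℝ => n * Real.exp (((dD - t)/σ) * ε + ε^2/2))
      atTop (nhds 0) := by
    rw [show (0:ℝ) = n * 0 by ring]
    exact (Real.tendsto_exp_atBot.comp hlin).const_mul n
  have hev : ∀ᶠ t in atTop,
      (n * Real.exp (((dD - t)/σ) * ε + ε^2/2) < c) ∧
      ((dD - t)/σ ≤ -1) ∧ ((dC - t)/σ ≤ 0) ∧ (0 ≤ (t - pC.1)/σ) := by
    refine ((hexp.eventually_lt_const hcpos).and
      (((eventually_ge_atTop (dD + σ)).mono ?_).and
      (((eventually_ge_atTop dC).mono ?_).and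
      ((eventually_ge_atTop pC.1).mono ?_))))
    · intro t ht
      rw [div_le_iff₀ hσ]; linarith
    · intro t ht
      apply div_nonpos_of_nonpos_of_nonneg (by linarith) hσ.le
    · intro t ht
      exact div_nonneg (by linarith) hσ.le
  obtain ⟨T, hT⟩ := eventually_atTop.1 hev
  have main : ∀ t > T,
      (D.map (fun p => Phi ((t - p.1) / σ) * Phi ((p.2 - t) / σ))).sum <
      (C.map (fun p => Phi ((t - p.1) / σ) * Phi ((p.2 - t) / σ))).sum := by
    intro t ht
    obtain ⟨hkey, hx1, hy0, hb0⟩ := hT t ht.le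
    set x : ℝ := (dD - t)/σ with hxdef
    set y : ℝ := (dC - t)/σ with hydef
    have hxy : y - ε = x + ε := by
      rw [hxdef, hydef, hεdef]
      field_simp
      ring
    have upper : (D.map (fun p => Phi ((t - p.1) / σ) * Phi ((p.2 - t) / σ))).sum
        ≤ n * Phi x := by
      have h1 : (D.map (fun p => Phi ((t - p.1) / σ) * Phi ((p.2 - t) / σ))).sum
          ≤ Multiset.card (D.map (fun p => Phi ((t - p.1) / σ) * Phi ((p.2 - t) / σ))) • Phi x := by
        apply Multiset.sum_le_card_nsmul
        intro a ha
        obtain ⟨p, hp, rfl⟩ := Multiset.mem_map.1 ha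
        calc Phi ((t - p.1)/σ) * Phi ((p.2 - t)/σ)
            ≤ 1 * Phi x := by
              apply mul_le_mul (Phi_le_one _) _ (Phi_nonneg _) one_pos.le
              apply Phi_mono
              apply div_le_div_of_nonneg_right _ hσ.le
              linarith [hdDmax p hp]
          _ = Phi x := one_mul _
      rw [Multiset.card_map] at h1
      rwa [nsmul_eq_mul] at h1
    have lower : Phi ((t - pC.1)/σ) * Phi y
        ≤ (C.map (fun p => Phi ((t - p.1) / σ) * Phi ((p.2 - t) / σ))).sum := by
      have hmem : Phi ((t - pC.1)/σ) * Phi ((pC.2 - t)/σ)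
          ∈ C.map (fun p => Phi ((t - p.1) / σ) * Phi ((p.2 - t) / σ)) :=
        Multiset.mem_map_of_mem _ hpC
      have hnn : ∀ a ∈ C.map (fun p => Phi ((t - p.1) / σ) * Phi ((p.2 - t) / σ)), (0:ℝ) ≤ a := by
        intro a ha
        obtain ⟨p, _, rfl⟩ := Multiset.mem_map.1 ha
        exact mul_nonneg (Phi_nonneg _) (Phi_nonneg _)
      have h2 := Multiset.single_le_sum hnn _ hmem
      rwa [hpC2] at h2
    have mid : n * Phi x < Phi ((t - pC.1)/σ) * Phi y := by
      calc n * Phi x ≤ n * Real.exp (-x^2/2) := by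
            apply mul_le_mul_of_nonneg_left (Phi_upper hx1) (by positivity)
        _ = n * Real.exp (x * ε + ε^2/2) * Real.exp (-(x+ε)^2/2) := by
            rw [mul_assoc, ← Real.exp_add]; ring_nf
        _ < c * Real.exp (-(x+ε)^2/2) := by
            apply mul_lt_mul_of_pos_right hkey (Real.exp_pos _)
        _ = Phi 0 * (ε * phi (y - ε)) := by
            rw [hxy, hc]
            unfold phi
            field_simp
        _ ≤ Phi 0 * Phi y :=
            mul_le_mul_of_nonneg_left (Phi_lower hy0 hε) (Phi_nonneg 0)
        _ ≤ Phi ((t - pC.1)/σ) * Phi y :=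
            mul_le_mul_of_nonneg_right (Phi_mono hb0) (Phi_nonneg y)
    exact lt_of_le_of_lt upper (lt_of_lt_of_le mid lower)
  refine ⟨⟨T, main⟩, ?_⟩
  intro h
  have h1 := main (T + 1) (lt_add_one T)
  have h2 := congrFun h (T + 1)
  rw [h2] at h1
  exact lt_irrefl _ h1
end
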